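/- Let m̄ > 0 solve the fixed-point equation FP(t,1), i.e., 1/m̄ = (1/N_t)·Σ_{a∈A} t_a/(1+t_a·m̄) + 1. Then (1/N_t)·Σ_{a∈A} (t_a·m̄/(1+t_a·m̄))² < 1; consequently the quantity m̄' := m̄² / (1 − (1/N_t)·Σ_{a∈A} (t_a·m̄/(1+t_a·m̄))²) is well-defined and strictly positive. -/
import Mathlib


open Finset

/-- For a solution `m̄` of FP(t,1), the normalized sum of squares is
strictly less than one, so the derivative-type quantity `m̄'` is well-defined and positive. -/
theorem fixed_point_derivative_well_defined
    (Nt : ℕ) (hNt : 0 < Nt)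
    (A : Type*) [Fintype A] [Nonempty A]
    (t : A → ℝ) (ht : ∀ a, 0 ≤ t a)
    (m : ℝ) (hm : 0 < m)
    (hfp : 1 / m = (1 / (Nt : ℝ)) * ∑ a, t a / (1 + t a * m) + 1) :
    (1 / (Nt : ℝ)) * ∑ a, (t a * m / (1 + t a * m)) ^ 2 < 1 ∧
    0 < m ^ 2 / (1 - (1 / (Nt : ℝ)) * ∑ a, (t a * m / (1 + t a * m)) ^ 2) := by
  have hNt' : (0 : ℝ) < (Nt : ℝ) := by exact_mod_cast hNt
  have hd : ∀ a, 0 < 1 + t a * m := by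
    intro a
    have := mul_nonneg (ht a) hm.le
    linarith
  have hsq : ∀ a, (t a * m / (1 + t a * m)) ^ 2 ≤ t a * m / (1 + t a * m) := by
    intro a
    have hx0 : 0 ≤ t a * m / (1 + t a * m) :=
      div_nonneg (mul_nonneg (ht a) hm.le) (hd a).le
    have hx1 : t a * m / (1 + t a * m) < 1 := by
      rw [div_lt_one (hd a)]
      linarith
    nlinarith
  have hsum : ∑ a, (t a * m / (1 + t a * m)) ^ 2 ≤ ∑ a, t a * m / (1 + t a * m) :=
    Finset.sum_le_sum fun a _ => hsq a
  have hrw : ∑ a, t a * m / (1 + t a * m) = m * ∑ a, t a / (1 + t a * m) := by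
    rw [Finset.mul_sum]
    exact Finset.sum_congr rfl fun a _ => by ring
  have hkey : (1 / (Nt : ℝ)) * ∑ a, t a * m / (1 + t a * m) = 1 - m := by
    rw [hrw]
    have h1 : (1 / (Nt : ℝ)) * ∑ a, t a / (1 + t a * m) = 1 / m - 1 := by linarith
    have : (1 / (Nt : ℝ)) * (m * ∑ a, t a / (1 + t a * m))
        = m * ((1 / (Nt : ℝ)) * ∑ a, t a / (1 + t a * m)) := by ring
    rw [this, h1]
    field_simp
  have hlt : (1 / (Nt : ℝ)) * ∑ a, (t a * m / (1 + t a * m)) ^ 2 < 1 := by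
    have h2 : (1 / (Nt : ℝ)) * ∑ a, (t a * m / (1 + t a * m)) ^ 2
        ≤ (1 / (Nt : ℝ)) * ∑ a, t a * m / (1 + t a * m) :=
      mul_le_mul_of_nonneg_left hsum (by positivity)
    linarith [hkey ▸ h2]
  exact ⟨hlt, div_pos (by positivity) (by linarith)⟩
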